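/- For any nonnegative integer r and 0 < μ_j ≤ μ_i, the inequality e^{-μ_j} μ_j^r / ∫_{μ_j}^∞ e^{-t} t^r dt ≤ e^{-μ_i} μ_i^r / ∫_{μ_i}^∞ e^{-t} t^r dt holds. -/

import Mathlib

open MeasureTheory

private lemma integrableOn_ugh (r : ℕ) {a : ℝ} (ha : 0 < a) :
    IntegrableOn (fun t => Real.exp (-t) * t ^ r) (Set.Ioi a) := by
  have h := Real.GammaIntegral_convergent (s := (r : ℝ) + 1) (by positivity)
  simp only [add_sub_cancel_right] at h
  refine (h.mono_set (Set.Ioi_subset_Ioi ha.le)).congr_fun (fun x hx => ?_) measurableSet_Ioi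
  simp only [Real.rpow_natCast]

private lemma shift_integral_ugh (f : ℝ → ℝ) (a d : ℝ) :
    (∫ x in Set.Ioi a, f (x + d)) = ∫ x in Set.Ioi (a + d), f x := by
  have A : MeasurableEmbedding fun x : ℝ => x + d :=
    (Homeomorph.addRight d).isClosedEmbedding.measurableEmbedding
  have h := A.setIntegral_map (μ := volume) f (Set.Ioi (a + d))
  rw [map_add_right_eq_self (volume : Measure ℝ)] at h
  rw [h]
  congr 1
  ext x
  simp

private lemma pos_integral_ugh (r : ℕ) {a : ℝ} (ha : 0 < a) :
    0 < ∫ t in Set.Ioi a, Real.exp (-t) * t ^ r := by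
  rw [setIntegral_pos_iff_support_of_nonneg_ae ?_ (integrableOn_ugh r ha)]
  · have hsub : Set.Ioo a (a + 1) ⊆ (Function.support fun t => Real.exp (-t) * t ^ r) ∩ Set.Ioi a := by
      intro x hx
      refine ⟨?_, hx.1⟩
      have hx0 : 0 < x := ha.trans hx.1
      simp only [Function.mem_support]
      positivity
    exact (by simp : (0:ENNReal) < volume (Set.Ioo a (a + 1))).trans_le (measure_mono hsub)
  · filter_upwards [ae_restrict_mem measurableSet_Ioi] with x hx
    have hx0 : 0 < x := ha.trans hx
    positivity

theorem upper_gamma_hazard_ineq (r : ℕ) (μi μj : ℝ) (h0 : 0 < μj) (hji : μj ≤ μi) :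
    Real.exp (-μj) * μj ^ r / ∫ t in Set.Ioi μj, Real.exp (-t) * t ^ r
      ≤ Real.exp (-μi) * μi ^ r / ∫ t in Set.Ioi μi, Real.exp (-t) * t ^ r := by
  have h0i : 0 < μi := h0.trans_le hji
  have hGj := pos_integral_ugh r h0
  have hGi := pos_integral_ugh r h0i
  rw [div_le_div_iff₀ hGj hGi]
  set d := μi - μj with hd
  have hd0 : 0 ≤ d := by simp [hd]; linarith
  have hshift : (∫ t in Set.Ioi μi, Real.exp (-t) * t ^ r)
      = ∫ t in Set.Ioi μj, Real.exp (-(t + d)) * (t + d) ^ r := by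
    rw [shift_integral_ugh (fun t => Real.exp (-t) * t ^ r) μj d]
    norm_num [hd]
  rw [hshift, ← integral_const_mul, ← integral_const_mul]
  have hintshift : IntegrableOn (fun t => Real.exp (-(t + d)) * (t + d) ^ r) (Set.Ioi μj) := by
    have A : MeasurableEmbedding fun x : ℝ => x + d :=
      (Homeomorph.addRight d).isClosedEmbedding.measurableEmbedding
    have h := (A.integrableOn_map_iff (μ := volume) (f := fun t => Real.exp (-t) * t ^ r)
      (s := Set.Ioi μi)).mp
    rw [map_add_right_eq_self (volume : Measure ℝ)] at h
    have h2 := h (integrableOn_ugh r h0i)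
    have : (fun x : ℝ => x + d) ⁻¹' Set.Ioi μi = Set.Ioi μj := by
      ext x; simp [hd]
    rwa [this] at h2
  apply setIntegral_mono_on
  · exact hintshift.const_mul _
  · exact (integrableOn_ugh r h0).const_mul _
  · exact measurableSet_Ioi
  · intro t ht
    have ht' : μj < t := ht
    have ht0 : 0 < t := h0.trans ht'
    have hμi : μi = μj + d := by rw [hd]; ring
    -- exponentials: exp(-μj)*exp(-(t+d)) = exp(-μi)*exp(-t)
    have hexp : Real.exp (-μj) * Real.exp (-(t + d)) = Real.exp (-μi) * Real.exp (-t) := by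
      rw [← Real.exp_add, ← Real.exp_add, hμi]; ring_nf
    have hpow : μj ^ r * (t + d) ^ r ≤ μi ^ r * t ^ r := by
      rw [← mul_pow, ← mul_pow]
      apply pow_le_pow_left₀ (by positivity)
      rw [hμi]; nlinarith
    calc Real.exp (-μj) * μj ^ r * (Real.exp (-(t + d)) * (t + d) ^ r)
        = (Real.exp (-μj) * Real.exp (-(t + d))) * (μj ^ r * (t + d) ^ r) := by ring
      _ ≤ (Real.exp (-μi) * Real.exp (-t)) * (μi ^ r * t ^ r) := by
          rw [hexp]
          exact mul_le_mul_of_nonneg_left hpow (by positivity)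
      _ = Real.exp (-μi) * μi ^ r * (Real.exp (-t) * t ^ r) := by ring
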